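/- Let p be prime with |∑_{1 ≤ n < p} λ(n)λ(p−n)| = p − 1, and let q < p be prime. Then λ(m)·λ(m + jp) = +1 for every 0 ≤ j < q and 1 ≤ m < p with m ≡ −jp (mod q). -/

import Mathlib

open Finset

def lam (n : ℕ) : ℤ := (-1) ^ (ArithmeticFunction.cardFactors n)

noncomputable def Slam (p : ℕ) (ξ : ℕ) : ℂ :=
  ∑ n ∈ Finset.Ico 1 p, (lam n : ℂ) * Complex.exp (2 * Real.pi * Complex.I * (n * ξ) / p)

/-! ### Basic facts about `lam` -/

lemma lam_one : lam 1 = 1 := by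
  simp [lam, ArithmeticFunction.cardFactors_one]

lemma lam_pm (n : ℕ) : lam n = 1 ∨ lam n = -1 := by
  unfold lam
  rcases Nat.even_or_odd (ArithmeticFunction.cardFactors n) with h | h
  · exact Or.inl (h.neg_one_pow)
  · exact Or.inr (h.neg_one_pow)

lemma lam_sq (n : ℕ) : lam n * lam n = 1 := by
  rcases lam_pm n with h | h <;> rw [h] <;> norm_num

lemma lam_mul {m n : ℕ} (hm : m ≠ 0) (hn : n ≠ 0) : lam (m * n) = lam m * lam n := by
  unfold lam
  rw [ArithmeticFunction.cardFactors_mul hm hn, pow_add]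

lemma lam_prime {q : ℕ} (hq : q.Prime) : lam q = -1 := by
  unfold lam
  rw [ArithmeticFunction.cardFactors_apply_prime hq, pow_one]

/-! ### Elementary arithmetic helpers -/

lemma not_dvd_of_lt {p x : ℕ} (h1 : 1 ≤ x) (h2 : x < p) : ¬ p ∣ x := by
  intro hd
  have := Nat.le_of_dvd (by omega) hd
  omega

lemma pndvd_mul {p a b : ℕ} (hp : p.Prime) (ha : ¬ p ∣ a) (hb : ¬ p ∣ b) : ¬ p ∣ a * b := by
  intro h
  rcases (Nat.Prime.dvd_mul hp).mp h with h' | h'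
  · exact ha h'
  · exact hb h'

lemma mod_bounds {p x : ℕ} (hp0 : 0 < p) (h : ¬ p ∣ x) : 1 ≤ x % p ∧ x % p < p := by
  constructor
  · rcases Nat.eq_zero_or_pos (x % p) with h0 | h0
    · exact absurd (Nat.dvd_of_mod_eq_zero h0) h
    · exact h0
  · exact Nat.mod_lt _ hp0

lemma mul_mod_mod (a x p : ℕ) : (a * (x % p)) % p = (a * x) % p := by
  conv_rhs => rw [Nat.mul_mod]
  rw [Nat.mul_mod, Nat.mod_mod_of_dvd _ dvd_rfl]

lemma sum_eq_p {p A B : ℕ} (hdvd : p ∣ A + B) (hA1 : 1 ≤ A) (hA : A < p)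
    (hB1 : 1 ≤ B) (hBp : B < p) : A + B = p := by
  have h1 : p ≤ A + B := Nat.le_of_dvd (by omega) hdvd
  have h3 : p ∣ A + B - p := Nat.dvd_sub hdvd dvd_rfl
  have h4 : A + B - p = 0 := Nat.eq_zero_of_dvd_of_lt h3 (by omega)
  omega

/-! ### Pigeonhole: some multiple `b*k` of `k` (with `1 ≤ b < q`) lands, mod `p`,
in `[1, p/q)` or in `(p - p/q, p)`. -/

lemma pigeon (p q k : ℕ) (hp : p.Prime) (hq2 : 2 ≤ q) (hqp : q < p)
    (hk1 : 1 ≤ k) (hkp : k < p) :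
    ∃ b, 1 ≤ b ∧ b < q ∧ (q * ((b * k) % p) < p ∨ q * (p - (b * k) % p) < p) := by
  have hp0 : 0 < p := hp.pos
  have hkd : ¬ p ∣ k := not_dvd_of_lt hk1 hkp
  by_cases h0 : ∃ b ∈ Ico 1 q, ((b * k) % p) * q / p = 0
  · obtain ⟨b, hb, hfb⟩ := h0
    rw [mem_Ico] at hb
    refine ⟨b, hb.1, hb.2, Or.inl ?_⟩
    have h' := (Nat.div_eq_zero_iff.mp hfb).resolve_left (by omega)
    rw [mul_comm]
    exact h'
  by_cases h1 : ∃ b ∈ Ico 1 q, ((b * k) % p) * q / p = q - 1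
  · obtain ⟨b, hb, hfb⟩ := h1
    rw [mem_Ico] at hb
    obtain ⟨r, hr⟩ : ∃ r, (b * k) % p = r := ⟨_, rfl⟩
    rw [hr] at hfb
    refine ⟨b, hb.1, hb.2, Or.inr ?_⟩
    rw [hr]
    have hrp : r < p := hr ▸ Nat.mod_lt _ hp0
    have hge : (q - 1) * p ≤ r * q := by
      have h' : q - 1 ≤ r * q / p := le_of_eq hfb.symm
      exact (Nat.le_div_iff_mul_le hp0).mp h'
    have e3 : q * (p - r) + q * r = q * p := by
      rw [← Nat.mul_add]
      congr 1
      omega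
    have e2 : (q - 1) * p + p = q * p := by
      have h' : (q - 1) * p = q * p - p := by rw [Nat.sub_mul, one_mul]
      have h'' : p ≤ q * p := Nat.le_mul_of_pos_left p (by omega)
      omega
    have hcomm : r * q = q * r := Nat.mul_comm r q
    have hle : q * (p - r) ≤ p := by linarith
    have hne : q * (p - r) ≠ p := by
      intro he
      have hdvd : q ∣ p := ⟨p - r, he.symm⟩
      rcases (Nat.Prime.eq_one_or_self_of_dvd hp q hdvd) with h' | h' <;> omega
    exact lt_of_le_of_ne hle hne
  -- collision case
  push_neg at h0 h1
  have hmaps : ∀ b ∈ Ico 1 q, ((b * k) % p) * q / p ∈ Ico 1 (q - 1) := by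
    intro b hb
    have hne0 := h0 b hb
    have hne1 := h1 b hb
    rw [mem_Ico]
    have hlt : ((b * k) % p) * q / p < q := by
      rw [Nat.div_lt_iff_lt_mul hp0]
      have hbk : (b * k) % p < p := Nat.mod_lt _ hp0
      calc ((b * k) % p) * q < p * q := by
            exact Nat.mul_lt_mul_of_lt_of_le hbk (le_refl q) (by omega)
        _ = q * p := Nat.mul_comm p q
    exact ⟨Nat.pos_of_ne_zero hne0, lt_of_le_of_ne (Nat.le_pred_of_lt hlt) hne1⟩
  have hcard2 : (Ico 1 (q - 1)).card < (Ico 1 q).card := by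
    rw [Nat.card_Ico, Nat.card_Ico]
    omega
  obtain ⟨b₁, hb₁, b₂, hb₂, hne, heq⟩ :=
    Finset.exists_ne_map_eq_of_card_lt_of_maps_to hcard2 hmaps
  have main : ∀ b₁ b₂ : ℕ, b₁ ∈ Ico 1 q → b₂ ∈ Ico 1 q → b₁ < b₂ →
      ((b₁ * k) % p) * q / p = ((b₂ * k) % p) * q / p →
      ∃ b, 1 ≤ b ∧ b < q ∧ (q * ((b * k) % p) < p ∨ q * (p - (b * k) % p) < p) := by
    intro b₁ b₂ hm₁ hm₂ hlt hfe
    rw [mem_Ico] at hm₁ hm₂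
    obtain ⟨d, hd⟩ : ∃ d, b₂ - b₁ = d := ⟨_, rfl⟩
    obtain ⟨r₁, hr₁⟩ : ∃ r, (b₁ * k) % p = r := ⟨_, rfl⟩
    obtain ⟨r₂, hr₂⟩ : ∃ r, (b₂ * k) % p = r := ⟨_, rfl⟩
    obtain ⟨t, ht⟩ : ∃ t, (d * k) % p = t := ⟨_, rfl⟩
    rw [hr₁, hr₂] at hfe
    refine ⟨d, by omega, by omega, ?_⟩
    rw [ht]
    have hr₁p : r₁ < p := hr₁ ▸ Nat.mod_lt _ hp0
    have hr₂p : r₂ < p := hr₂ ▸ Nat.mod_lt _ hp0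
    have htp : t < p := ht ▸ Nat.mod_lt _ hp0
    have ht1 : 1 ≤ t := by
      have hnd : ¬ p ∣ d * k := pndvd_mul hp (not_dvd_of_lt (by omega) (by omega)) hkd
      exact ht ▸ (mod_bounds hp0 hnd).1
    obtain ⟨i, hi⟩ : ∃ i, r₁ * q / p = i := ⟨_, rfl⟩
    have hig : i * p ≤ r₁ * q := by
      rw [← hi]
      exact Nat.div_mul_le_self _ _
    have hig2 : i * p ≤ r₂ * q := by
      have h' : i ≤ r₂ * q / p := le_of_eq (hi ▸ hfe)
      exact (Nat.le_div_iff_mul_le hp0).mp h'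
    have hilt : r₁ * q < (i + 1) * p := by
      have h' : r₁ * q / p < i + 1 := by rw [hi]; exact Nat.lt_succ_self _
      exact (Nat.div_lt_iff_lt_mul hp0).mp h'
    have hilt2 : r₂ * q < (i + 1) * p := by
      have h' : r₂ * q / p < i + 1 := by rw [← hfe, hi]; exact Nat.lt_succ_self _
      exact (Nat.div_lt_iff_lt_mul hp0).mp h'
    have hip : (i + 1) * p = i * p + p := by ring
    have e0 : (r₁ + t) % p = r₂ := by
      rw [← hr₁, ← ht, ← Nat.add_mod]
      have h' : b₁ * k + d * k = b₂ * k := by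
        rw [← Nat.add_mul]
        congr 1
        omega
      rw [h', hr₂]
    rcases Nat.lt_or_ge (r₁ + t) p with hcase | hcase
    · have he : r₁ + t = r₂ := by rw [← e0, Nat.mod_eq_of_lt hcase]
      left
      have e : q * r₁ + q * t = q * r₂ := by rw [← Nat.mul_add, he]
      have c1 : r₁ * q = q * r₁ := Nat.mul_comm r₁ q
      have c2 : r₂ * q = q * r₂ := Nat.mul_comm r₂ q
      linarith [hig, hilt2, hip, e, c1, c2]
    · have he : r₁ + t = r₂ + p := by
        have h' := Nat.mod_eq_sub_mod hcase
        rw [h', Nat.mod_eq_of_lt (by omega)] at e0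
        omega
      right
      have e : q * r₂ + q * (p - t) = q * r₁ := by
        rw [← Nat.mul_add]
        congr 1
        omega
      have c1 : r₁ * q = q * r₁ := Nat.mul_comm r₁ q
      have c2 : r₂ * q = q * r₂ := Nat.mul_comm r₂ q
      linarith [hig2, hilt, hip, e, c1, c2]
  rcases lt_or_gt_of_ne hne with hlt | hgt
  · exact main b₁ b₂ hb₁ hb₂ hlt heq
  · exact main b₂ b₁ hb₂ hb₁ hgt heq.symm

/-! ### Smooth multiplication lemma -/

lemma SM (p q : ℕ) (hp : p.Prime) (hqp : q ≤ p)
    (IH : ∀ s, s.Prime → s < q → ∀ x, 1 ≤ x → x < p → lam ((s * x) % p) = -lam x) :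
    ∀ a, 0 < a → (∀ s, s.Prime → s ∣ a → s < q) →
      ∀ x, 1 ≤ x → x < p → lam ((a * x) % p) = lam a * lam x := by
  have hp0 : 0 < p := hp.pos
  intro a
  induction a using Nat.strong_induction_on with
  | _ a IHa =>
    intro ha0 hsm x hx1 hxp
    rcases Nat.lt_or_ge a 2 with ha1 | ha2
    · -- a = 1
      have : a = 1 := by omega
      subst this
      rw [one_mul, Nat.mod_eq_of_lt hxp, lam_one, one_mul]
    · -- a ≥ 2
      obtain ⟨s, hs⟩ : ∃ s, a.minFac = s := ⟨_, rfl⟩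
      have hsprime : s.Prime := hs ▸ Nat.minFac_prime (by omega)
      have hsd : s ∣ a := hs ▸ Nat.minFac_dvd a
      have hsq : s < q := hsm s hsprime hsd
      obtain ⟨a₁, ha₁⟩ : ∃ a₁, a / s = a₁ := ⟨_, rfl⟩
      have haeq : a = s * a₁ := ha₁ ▸ (Nat.mul_div_cancel' hsd).symm
      have ha₁lt : a₁ < a := ha₁ ▸ Nat.div_lt_self ha0 hsprime.one_lt
      have ha₁0 : 0 < a₁ := ha₁ ▸ Nat.div_pos (Nat.le_of_dvd ha0 hsd) hsprime.pos
      have ha₁sm : ∀ s', s'.Prime → s' ∣ a₁ → s' < q := by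
        intro s' hs' hd'
        exact hsm s' hs' (hd'.trans ⟨s, by rw [haeq]; ring⟩)
      have hpa₁ : ¬ p ∣ a₁ := by
        intro hd
        have := ha₁sm p hp hd
        omega
      have hpx : ¬ p ∣ x := not_dvd_of_lt hx1 hxp
      have hX : ¬ p ∣ a₁ * x := pndvd_mul hp hpa₁ hpx
      obtain ⟨hX1, hXp⟩ := mod_bounds hp0 hX
      have key1 : lam ((s * ((a₁ * x) % p)) % p) = -lam ((a₁ * x) % p) :=
        IH s hsprime hsq _ hX1 hXp
      have key2 : lam ((a₁ * x) % p) = lam a₁ * lam x := IHa a₁ ha₁lt ha₁0 ha₁sm x hx1 hxp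
      have e : (a * x) % p = (s * ((a₁ * x) % p)) % p := by
        rw [mul_mod_mod]
        congr 1
        rw [haeq]
        ring
      have hla : lam a = -lam a₁ := by
        rw [haeq, lam_mul hsprime.ne_zero (by omega), lam_prime hsprime]
        ring
      rw [e, key1, key2, hla]
      ring

/-! ### The key lemma: `lam ((q*k) % p) = - lam k` -/

lemma CL (p : ℕ) (hp : p.Prime)
    (hh : ∀ n, 1 ≤ n → n < p → lam (p - n) = lam (p - 1) * lam n) :
    ∀ q, q.Prime → q < p → ∀ k, 1 ≤ k → k < p → lam ((q * k) % p) = -lam k := by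
  have hp0 : 0 < p := hp.pos
  intro q
  induction q using Nat.strong_induction_on with
  | _ q IHq =>
    intro hq hqp k hk1 hkp
    have hsm := SM p q hp (le_of_lt hqp)
      (fun s hs hslt => IHq s hslt hs (hslt.trans hqp))
    obtain ⟨b, hb1, hbq, hcase⟩ := pigeon p q k hp hq.two_le hqp hk1 hkp
    have hbsmooth : ∀ s, s.Prime → s ∣ b → s < q := by
      intro s hs hsd
      exact lt_of_le_of_lt (Nat.le_of_dvd (by omega) hsd) hbq
    have hpb : ¬ p ∣ b := not_dvd_of_lt hb1 (by omega)
    have hpk : ¬ p ∣ k := not_dvd_of_lt hk1 hkp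
    have hpq : ¬ p ∣ q := not_dvd_of_lt (by omega) hqp
    have hpbk : ¬ p ∣ b * k := pndvd_mul hp hpb hpk
    have hpqk : ¬ p ∣ q * k := pndvd_mul hp hpq hpk
    obtain ⟨hr1, hrp⟩ := mod_bounds hp0 hpbk
    obtain ⟨hX1, hXp⟩ := mod_bounds hp0 hpqk
    set r := (b * k) % p with hrdef
    -- key : lam ((q*r) % p) = - lam r
    have key : lam ((q * r) % p) = -lam r := by
      rcases hcase with hA | hB
      · rw [Nat.mod_eq_of_lt hA, lam_mul (by omega) (by omega), lam_prime hq]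
        ring
      · -- q * (p - r) < p
        have hpr1 : 1 ≤ p - r := by omega
        have hprp : p - r < p := by omega
        have hA1 : 1 ≤ q * (p - r) := Nat.mul_pos (by omega) (by omega)
        have hpqr : ¬ p ∣ q * r := pndvd_mul hp hpq (not_dvd_of_lt hr1 hrp)
        obtain ⟨hB1, hBp⟩ := mod_bounds hp0 hpqr
        have hsumqp : q * (p - r) + q * r = q * p := by
          rw [← Nat.mul_add]
          congr 1
          omega
        have hdvd : p ∣ q * (p - r) + (q * r) % p := by
          apply Nat.dvd_of_mod_eq_zero
          have h1 : (q * (p - r) + (q * r) % p) % p = (q * (p - r) + q * r) % p := by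
            conv_lhs => rw [Nat.add_mod]
            conv_rhs => rw [Nat.add_mod]
            rw [Nat.mod_mod_of_dvd _ dvd_rfl]
          rw [h1, hsumqp, Nat.mul_mod_left]
        have hu : q * (p - r) + (q * r) % p = p := sum_eq_p hdvd hA1 hB hB1 hBp
        have hX : (q * r) % p = p - (q * (p - r)) := by omega
        rw [hX, hh (q * (p - r)) hA1 hB, lam_mul (by omega) (by omega), lam_prime hq,
          hh r hr1 hrp]
        have hε := lam_sq (p - 1)
        linear_combination (-lam r) * hε
    -- transfer
    have e : (q * r) % p = (b * ((q * k) % p)) % p := by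
      rw [hrdef, mul_mod_mod, mul_mod_mod]
      congr 1
      ring
    have h1 : lam ((b * ((q * k) % p)) % p) = lam b * lam ((q * k) % p) :=
      hsm b (by omega) hbsmooth _ hX1 hXp
    have h2 : lam r = lam b * lam k := by
      rw [hrdef]
      exact hsm b (by omega) hbsmooth k hk1 hkp
    have h' : lam b * lam ((q * k) % p) = -(lam b * lam k) := by
      rw [← h1, ← e, key, h2]
    have hb2 := lam_sq b
    linear_combination lam b * h' - (lam ((q * k) % p) + lam k) * hb2

/-! ### From the hypothesis to the reflection property -/

lemma refl_of_h (p : ℕ) (hp : p.Prime)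
    (h : |∑ n ∈ Finset.Ico 1 p, lam n * lam (p - n)| = (p : ℤ) - 1) :
    ∀ n, 1 ≤ n → n < p → lam (p - n) = lam (p - 1) * lam n := by
  have hp2 := hp.two_le
  have hcard : (Ico 1 p).card = p - 1 := by rw [Nat.card_Ico]
  have hcast : ((p - 1 : ℕ) : ℤ) = (p : ℤ) - 1 := by
    have : (1 : ℕ) ≤ p := by omega
    push_cast [Nat.cast_sub this]
    ring
  have hterm : ∀ n ∈ Ico 1 p, lam n * lam (p - n) = 1 ∨ lam n * lam (p - n) = -1 := by
    intro n _
    rcases lam_pm n with h1 | h1 <;> rcases lam_pm (p - n) with h2 | h2 <;>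
      rw [h1, h2] <;> norm_num
  have h1mem : (1 : ℕ) ∈ Ico 1 p := by
    rw [mem_Ico]
    omega
  have habs := (abs_eq (by
    have : (2 : ℤ) ≤ (p : ℤ) := by exact_mod_cast hp2
    linarith)).mp h
  have hall : ∀ n ∈ Ico 1 p, lam n * lam (p - n) = lam 1 * lam (p - 1) := by
    rcases habs with hS | hS
    · have hz : ∑ n ∈ Ico 1 p, (1 - lam n * lam (p - n)) = 0 := by
        rw [Finset.sum_sub_distrib, Finset.sum_const, hcard, hS]
        simp [hcast]
      have hnn : ∀ n ∈ Ico 1 p, 0 ≤ 1 - lam n * lam (p - n) := by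
        intro n hn
        rcases hterm n hn with h' | h' <;> rw [h'] <;> norm_num
      have hone := (Finset.sum_eq_zero_iff_of_nonneg hnn).mp hz
      intro n hn
      have hn' := hone n hn
      have h1' := hone 1 h1mem
      have e1 : lam n * lam (p - n) = 1 := by linarith
      have e2 : lam 1 * lam (p - 1) = 1 := by linarith
      rw [e1, e2]
    · have hz : ∑ n ∈ Ico 1 p, (1 + lam n * lam (p - n)) = 0 := by
        rw [Finset.sum_add_distrib, Finset.sum_const, hcard, hS]
        simp [hcast]
      have hnn : ∀ n ∈ Ico 1 p, 0 ≤ 1 + lam n * lam (p - n) := by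
        intro n hn
        rcases hterm n hn with h' | h' <;> rw [h'] <;> norm_num
      have hone := (Finset.sum_eq_zero_iff_of_nonneg hnn).mp hz
      intro n hn
      have hn' := hone n hn
      have h1' := hone 1 h1mem
      have e1 : lam n * lam (p - n) = -1 := by linarith
      have e2 : lam 1 * lam (p - 1) = -1 := by linarith
      rw [e1, e2]
  intro n hn1 hnp
  have h' := hall n (by rw [mem_Ico]; omega)
  rw [lam_one, one_mul] at h'
  have hsq := lam_sq n
  linear_combination lam n * h' - lam (p - n) * hsq

/-! ### Main theorem -/

theorem stmt_17 (p q : ℕ) (hp : p.Prime) (hq : q.Prime) (hqp : q < p)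
    (h : |∑ n ∈ Finset.Ico 1 p, lam n * lam (p - n)| = (p : ℤ) - 1) :
    ∀ j m, j < q → 1 ≤ m → m < p → (m + j * p) % q = 0 →
      lam m * lam (m + j * p) = 1 := by
  intro j m hj hm1 hmp hmod
  have hq2 := hq.two_le
  have hdvd : q ∣ m + j * p := Nat.dvd_of_mod_eq_zero hmod
  obtain ⟨k, hk⟩ := hdvd
  have hk1 : 1 ≤ k := by
    rcases Nat.eq_zero_or_pos k with h0 | h0
    · rw [h0, Nat.mul_zero] at hk
      omega
    · exact h0
  have hkp : k < p := by
    have hlt : q * k < q * p := by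
      rw [← hk]
      calc m + j * p < p + j * p := by omega
        _ = (j + 1) * p := by ring
        _ ≤ q * p := Nat.mul_le_mul_right p (by omega)
    exact Nat.lt_of_mul_lt_mul_left hlt
  have hmk : (q * k) % p = m := by
    rw [← hk, Nat.add_mul_mod_self_right, Nat.mod_eq_of_lt hmp]
  have hcl := CL p hp (refl_of_h p hp h) q hq hqp k hk1 hkp
  rw [hmk] at hcl
  have hlam2 : lam (m + j * p) = -lam k := by
    rw [hk, lam_mul (by omega) (by omega), lam_prime hq]
    ring
  rw [hlam2, hcl]
  linear_combination lam_sq k
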